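/- Let k > 0. There is a constant K = K(k) such that: if Y ~ Bin(n, p) with np ≤ ν ≤ k, and X is a nonnegative random variable with mean μ that is stochastically dominated by kY, then for all θ ∈ [-1, 1], E[(X - μ)² e^{θ(X - μ)}] ≤ Kν. -/

import Mathlib

open MeasureTheory
open scoped Nat

lemma exp_tsum' (x : ℝ) : ∑' n : ℕ, x ^ n / n ! = Real.exp x := by
  rw [Real.exp_eq_exp_ℝ, NormedSpace.exp_eq_tsum_div]

lemma aux_tsum (c x : ℝ) (hc : 0 ≤ c) (hx : 0 ≤ x) :
    ∑' i : ℕ, ENNReal.ofReal (c * (x ^ i / i !)) = ENNReal.ofReal (c * Real.exp x) := by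
  rw [← exp_tsum' x, ← tsum_mul_left]
  exact (ENNReal.ofReal_tsum_of_nonneg (fun n => by positivity)
    ((Real.summable_pow_div_factorial x).mul_left c)).symm

lemma binom_term_le (n j : ℕ) (p ν k : ℝ) (hp0 : 0 ≤ p) (hp1 : p ≤ 1)
    (hnp : (n:ℝ)*p ≤ ν) (hν0 : 0 ≤ ν) (hνk : ν ≤ k) :
    (n.choose (j+1) : ℝ) * p^(j+1) * (1-p)^(n-(j+1)) ≤ ν * k^j / (j+1)! := by
  have hk0 : 0 ≤ k := hν0.trans hνk
  have h1 : (1-p)^(n-(j+1)) ≤ 1 := pow_le_one₀ (by linarith) (by linarith)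
  have h2 : (n.choose (j+1):ℝ) ≤ (n:ℝ)^(j+1)/(j+1)! :=
    Nat.choose_le_pow_div (j+1) n
  have h3 : ((n:ℝ)*p)^(j+1) ≤ ν * k^j := by
    calc ((n:ℝ)*p)^(j+1) ≤ ν^(j+1) := by
          apply pow_le_pow_left₀ (by positivity) hnp
      _ = ν * ν^j := by ring
      _ ≤ ν * k^j := by gcongr
  calc (n.choose (j+1) : ℝ) * p^(j+1) * (1-p)^(n-(j+1))
      ≤ (n.choose (j+1) : ℝ) * p^(j+1) * 1 := by
        have : (0:ℝ) ≤ (n.choose (j+1) : ℝ) * p^(j+1) := by positivity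
        nlinarith
    _ = (n.choose (j+1) : ℝ) * p^(j+1) := by ring
    _ ≤ ((n:ℝ)^(j+1)/(j+1)!) * p^(j+1) := by
        gcongr
    _ = ((n:ℝ)*p)^(j+1) / (j+1)! := by rw [mul_pow]; ring
    _ ≤ (ν * k^j) / (j+1)! := by gcongr
    _ = ν * k^j / (j+1)! := rfl

lemma tail_bound {Ω' : Type} [MeasurableSpace Ω'] (μ' : Measure Ω')
    (n : ℕ) (p ν k : ℝ) (Y : Ω' → ℕ)
    (hp0 : 0 ≤ p) (hp1 : p ≤ 1) (hnp : (n:ℝ)*p ≤ ν) (hν0 : 0 ≤ ν) (hνk : ν ≤ k)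
    (hpmf : ∀ m : ℕ, μ' {ω | Y ω = m} =
      ENNReal.ofReal ((n.choose m : ℝ) * p ^ m * (1 - p) ^ (n - m))) (m : ℕ) :
    μ' {ω | m + 1 ≤ Y ω} ≤ ENNReal.ofReal (ν * k^m / (m+1)! * Real.exp k) := by
  have hk0 : 0 ≤ k := hν0.trans hνk
  have hsub : {ω | m + 1 ≤ Y ω} ⊆ ⋃ i : ℕ, {ω | Y ω = m+1+i} := by
    intro ω hω
    have hω' : m + 1 ≤ Y ω := hω
    exact Set.mem_iUnion.2 ⟨Y ω - (m+1), by simp only [Set.mem_setOf_eq]; omega⟩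
  refine (measure_mono hsub).trans ((measure_iUnion_le _).trans ?_)
  have key : ∀ i : ℕ, μ' {ω | Y ω = m+1+i}
      ≤ ENNReal.ofReal ((ν * k^m / (m+1)!) * (k^i / i !)) := by
    intro i
    rw [hpmf (m+1+i)]
    apply ENNReal.ofReal_le_ofReal
    have h1 : (n.choose (m+i+1) : ℝ) * p^(m+i+1) * (1-p)^(n-(m+i+1))
        ≤ ν * k^(m+i) / (m+i+1)! := binom_term_le n (m+i) p ν k hp0 hp1 hnp hν0 hνk
    have h2 : ((m+1)! * i ! : ℕ) ≤ ((m+1+i)! : ℕ) :=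
      Nat.le_of_dvd (m+1+i).factorial_pos (Nat.factorial_mul_factorial_dvd_factorial_add (m+1) i)
    have h2' : ((m+1)! * i ! : ℝ) ≤ ((m+1+i)! : ℝ) := by exact_mod_cast h2
    have heq : m+1+i = m+i+1 := by omega
    rw [heq]
    refine h1.trans ?_
    rw [show m+i+1 = (m+1)+i from by omega]
    have h3 : ν * k^(m+i) / ((m+1)+i)! ≤ ν * k^(m+i) / ((m+1)! * i !) := by
      apply div_le_div_of_nonneg_left (by positivity) (by positivity)
      · exact_mod_cast h2'
    refine h3.trans ?_
    rw [pow_add]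
    apply le_of_eq
    rw [div_mul_div_comm]
    ring
  refine (ENNReal.tsum_le_tsum key).trans ?_
  rw [aux_tsum _ _ (by positivity) hk0]

lemma term_le (k ν D B : ℝ) (hk : 0 < k) (hν : 0 ≤ ν) (hD : 0 ≤ D) (hB : 0 ≤ B) (m : ℕ) :
    (D*((k*((m:ℝ)+2))^2+B)*Real.exp (k*((m:ℝ)+2))) * (ν*k^m/(m+1)!*Real.exp k)
      ≤ ν*((16*D*(k^2+B)*Real.exp (3*k))*((4*k*Real.exp k)^m/m !)) := by
  have hfac : ((m)! : ℝ) ≤ ((m+1)! : ℝ) := by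
    exact_mod_cast Nat.factorial_le (Nat.le_succ m)
  have h2p : ((m:ℝ)+2) ≤ 2^(m+2) := by
    have := Nat.lt_two_pow_self (n := m+2)
    have := this.le
    exact_mod_cast Nat.cast_le.2 this |>.trans_eq (by push_cast; ring) |>.trans_eq rfl
  have hsq4 : (((2:ℝ))^(m+2))^2 = 4^(m+2) := by
    rw [← pow_mul, show (4:ℝ) = 2^2 by norm_num, ← pow_mul, Nat.mul_comm]
  have h44 : ((4:ℝ))^(m+2) = 16*4^m := by rw [pow_add]; norm_num; ring
  have h4 : ((m:ℝ)+2)^2 ≤ 16*4^m := by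
    have hmn : (0:ℝ) ≤ (m:ℝ)+2 := by positivity
    calc ((m:ℝ)+2)^2 ≤ ((2:ℝ)^(m+2))^2 := by gcongr
      _ = 16*4^m := by rw [hsq4, h44]
  have h16 : (1:ℝ) ≤ 16*4^m := by
    have h1 : (1:ℝ) ≤ 4^m := one_le_pow₀ (by norm_num)
    nlinarith
  have hP : (k*((m:ℝ)+2))^2 + B ≤ 16*(k^2+B)*4^m := by nlinarith [sq_nonneg k]
  have hexp2 : Real.exp (k*((m:ℝ)+2)) = Real.exp k ^ m * Real.exp (2*k) := by
    rw [show k*((m:ℝ)+2) = (m:ℝ)*k + 2*k by ring, Real.exp_add, Real.exp_nat_mul]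
  have hexp3 : Real.exp (3*k) = Real.exp (2*k) * Real.exp k := by
    rw [← Real.exp_add]; ring_nf
  calc (D*((k*((m:ℝ)+2))^2+B)*Real.exp (k*((m:ℝ)+2))) * (ν*k^m/(m+1)!*Real.exp k)
      = (D * Real.exp (2*k) * Real.exp k * ν) *
        (((k*((m:ℝ)+2))^2+B) * ((Real.exp k*k)^m) / (m+1)!) := by
        rw [hexp2, mul_pow]; ring
    _ ≤ (D * Real.exp (2*k) * Real.exp k * ν) *
        ((16*(k^2+B)*4^m) * ((Real.exp k*k)^m) / (m)!) := by
        apply mul_le_mul_of_nonneg_left ?_ (by positivity)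
        gcongr
    _ = ν*((16*D*(k^2+B)*Real.exp (3*k))*((4*k*Real.exp k)^m/m !)) := by
        rw [hexp3, mul_pow, mul_pow]; ring

lemma mean_bound {Ω Ω' : Type} [MeasurableSpace Ω] [MeasurableSpace Ω']
    (μ : Measure Ω) (μ' : Measure Ω')
    (n : ℕ) (p ν k : ℝ) (Y : Ω' → ℕ) (X' : Ω → ℝ)
    (hk : 0 < k) (hp0 : 0 ≤ p) (hp1 : p ≤ 1) (hnp : (n:ℝ)*p ≤ ν) (hν0 : 0 ≤ ν) (hνk : ν ≤ k)
    (hpmf : ∀ m : ℕ, μ' {ω | Y ω = m} =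
      ENNReal.ofReal ((n.choose m : ℝ) * p ^ m * (1 - p) ^ (n - m)))
    (hX'm : Measurable X') (hX'nn : 0 ≤ᵐ[μ] X') (hInt' : Integrable X' μ)
    (hdom' : ∀ x : ℝ, μ {ω | x ≤ X' ω} ≤ μ' {ω | x ≤ k*(Y ω:ℝ)}) :
    ∫ ω, X' ω ∂μ ≤ ν * k * Real.exp k := by
  have hk0 : 0 ≤ k := hk.le
  set b : ℕ → ℝ := fun j => (n.choose j : ℝ) * p ^ j * (1 - p) ^ (n - j) with hbdef
  set F : ℝ → ENNReal := fun t => ∑' j : ℕ,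
    Set.indicator (Set.Iic (k*((j:ℝ)+1))) (fun _ => ENNReal.ofReal (b (j+1))) t with hF
  have hFmeas : Measurable F := by
    apply Measurable.ennreal_tsum
    intro j
    exact Measurable.indicator measurable_const measurableSet_Iic
  have key : ENNReal.ofReal (∫ ω, X' ω ∂μ) ≤ ENNReal.ofReal (ν * k * Real.exp k) := by
    calc ENNReal.ofReal (∫ ω, X' ω ∂μ) = ∫⁻ ω, ENNReal.ofReal (X' ω) ∂μ :=
          ofReal_integral_eq_lintegral_ofReal hInt' hX'nn
      _ = ∫⁻ t in Set.Ioi 0, μ {ω | t ≤ X' ω} :=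
          lintegral_eq_lintegral_meas_le μ hX'nn hX'm.aemeasurable
      _ ≤ ∫⁻ t in Set.Ioi 0, F t := by
          apply setLIntegral_mono hFmeas
          intro t ht
          have ht0 : (0:ℝ) < t := ht
          refine (hdom' t).trans ?_
          have hsub : {ω | t ≤ k*(Y ω:ℝ)} ⊆
              ⋃ j : ℕ, {ω | Y ω = j+1 ∧ t ≤ k*((j:ℝ)+1)} := by
            intro ω hω
            have hω' : t ≤ k*(Y ω:ℝ) := hω
            have hY1 : 1 ≤ Y ω := by
              by_contra h
              push_neg at h
              interval_cases hYω : Y ω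
              · simp [hYω] at hω'; nlinarith
            refine Set.mem_iUnion.2 ⟨Y ω - 1, ?_, ?_⟩
            · omega
            · have : ((Y ω - 1 : ℕ):ℝ) + 1 = (Y ω : ℝ) := by
                have : (1:ℕ) ≤ Y ω := hY1
                push_cast [Nat.cast_sub this]
                ring
              rw [this]; exact hω'
          refine (measure_mono hsub).trans ((measure_iUnion_le _).trans ?_)
          apply ENNReal.tsum_le_tsum
          intro j
          by_cases hc : t ≤ k*((j:ℝ)+1)
          · have : {ω | Y ω = j+1 ∧ t ≤ k*((j:ℝ)+1)} ⊆ {ω | Y ω = j+1} :=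
              fun ω hω => hω.1
            refine (measure_mono this).trans ?_
            rw [hpmf (j+1), Set.indicator_of_mem (Set.mem_Iic.2 hc)]
          · have : {ω | Y ω = j+1 ∧ t ≤ k*((j:ℝ)+1)} = ∅ := by
              ext ω; simp only [Set.mem_setOf_eq, Set.mem_empty_iff_false, iff_false]
              rintro ⟨-, h⟩; exact hc h
            rw [this, Set.indicator_of_notMem (by simpa [Set.mem_Iic] using hc)]
            simp
      _ = ∑' j : ℕ, ENNReal.ofReal (b (j+1)) * volume (Set.Iic (k*((j:ℝ)+1)) ∩ Set.Ioi 0) := by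
          rw [hF]
          rw [lintegral_tsum (fun j => (Measurable.indicator measurable_const
            measurableSet_Iic).aemeasurable)]
          congr 1
          ext j
          rw [lintegral_indicator measurableSet_Iic, setLIntegral_const,
            Measure.restrict_apply measurableSet_Iic]
      _ ≤ ∑' j : ℕ, ENNReal.ofReal ((ν * k) * (k^j / j !)) := by
          apply ENNReal.tsum_le_tsum
          intro j
          have hvol : volume (Set.Iic (k*((j:ℝ)+1)) ∩ Set.Ioi 0) =
              ENNReal.ofReal (k*((j:ℝ)+1)) := by
            rw [Set.Iic_inter_Ioi, Real.volume_Ioc, sub_zero]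
          have hbnn : 0 ≤ b (j+1) := by
            show (0:ℝ) ≤ (n.choose (j+1):ℝ) * p^(j+1) * (1-p)^(n-(j+1))
            exact mul_nonneg (mul_nonneg (by positivity) (by positivity))
              (pow_nonneg (by linarith) _)
          rw [hvol, ← ENNReal.ofReal_mul hbnn]
          apply ENNReal.ofReal_le_ofReal
          have h1 : b (j+1) ≤ ν * k^j / (j+1)! :=
            binom_term_le n j p ν k hp0 hp1 hnp hν0 hνk
          have hfs : ((j+1)! : ℝ) = ((j:ℝ)+1) * (j)! := by
            rw [Nat.factorial_succ]; push_cast; ring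
          calc b (j+1) * (k*((j:ℝ)+1)) ≤ (ν * k^j / (j+1)!) * (k*((j:ℝ)+1)) := by
                apply mul_le_mul_of_nonneg_right h1 (by positivity)
            _ = (ν * k) * (k^j / j !) := by
                rw [hfs]
                have hj0 : (Nat.factorial j : ℝ) ≠ 0 := by positivity
                field_simp
      _ = ENNReal.ofReal (ν * k * Real.exp k) := aux_tsum (ν*k) k (by positivity) hk0
  rw [ENNReal.ofReal_le_ofReal_iff (by positivity)] at key
  · exact key

theorem binomial_domination_exp_moment (k : ℝ) (hk : 0 < k) :
    ∃ K : ℝ, 0 < K ∧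
      ∀ (Ω Ω' : Type) (_ : MeasurableSpace Ω) (_ : MeasurableSpace Ω')
          (μ : Measure Ω) (μ' : Measure Ω'),
        IsProbabilityMeasure μ → IsProbabilityMeasure μ' →
        ∀ (n : ℕ) (p ν : ℝ) (Y : Ω' → ℕ) (X : Ω → ℝ) (μ₀ : ℝ),
          0 ≤ p → p ≤ 1 → (n : ℝ) * p ≤ ν → ν ≤ k →
          (∀ m : ℕ, μ' {ω | Y ω = m} =
            ENNReal.ofReal ((n.choose m : ℝ) * p ^ m * (1 - p) ^ (n - m))) →
          (∀ ω, 0 ≤ X ω) →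
          Integrable X μ → ∫ ω, X ω ∂μ = μ₀ →
          (∀ x : ℝ, μ {ω | x ≤ X ω} ≤ μ' {ω | x ≤ k * (Y ω : ℝ)}) →
          ∀ θ : ℝ, -1 ≤ θ → θ ≤ 1 →
            ∫⁻ ω, ENNReal.ofReal ((X ω - μ₀) ^ 2 * Real.exp (θ * (X ω - μ₀))) ∂μ
              ≤ ENNReal.ofReal (K * ν) := by
  refine ⟨(2*Real.exp (k^2*Real.exp k))*Real.exp k*(k*Real.exp k)^2*k
      + (2*Real.exp (k^2*Real.exp k))*(k*Real.exp k)^2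
      + (16*(2*Real.exp (k^2*Real.exp k))*(k^2+(k^2*Real.exp k)^2)*Real.exp (3*k))
          *Real.exp (4*k*Real.exp k)
      + 1, by positivity, ?_⟩
  intro Ω Ω' mΩ mΩ' μ μ' hPμ hPμ' n p ν Y X μ₀ hp0 hp1 hnp hνk hpmf hXnn hInt hmean hdom θ hθ1 hθ2
  obtain ⟨E, hEdef⟩ : ∃ E, E = Real.exp k := ⟨_, rfl⟩
  obtain ⟨B₀, hB₀def⟩ : ∃ B₀, B₀ = k^2*E := ⟨_, rfl⟩
  obtain ⟨D, hDdef⟩ : ∃ D, D = 2*Real.exp B₀ := ⟨_, rfl⟩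
  obtain ⟨B, hBdef⟩ : ∃ B, B = B₀^2 := ⟨_, rfl⟩
  obtain ⟨Q, hQdef⟩ : ∃ Q, Q = 16*D*(k^2+B)*Real.exp (3*k) := ⟨_, rfl⟩
  obtain ⟨r, hrdef⟩ : ∃ r, r = 4*k*E := ⟨_, rfl⟩
  rw [show (2*Real.exp (k^2*Real.exp k))*Real.exp k*(k*Real.exp k)^2*k
      + (2*Real.exp (k^2*Real.exp k))*(k*Real.exp k)^2
      + (16*(2*Real.exp (k^2*Real.exp k))*(k^2+(k^2*Real.exp k)^2)*Real.exp (3*k))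
          *Real.exp (4*k*Real.exp k)
      + 1 = D*E*(k*E)^2*k + D*(k*E)^2 + Q*Real.exp r + 1 by
    rw [hQdef, hrdef, hDdef, hBdef, hB₀def, hEdef]]
  have hk0 : 0 ≤ k := hk.le
  have hν0 : (0:ℝ) ≤ ν := le_trans (by positivity) hnp
  have hE0 : 0 < E := by rw [hEdef]; exact Real.exp_pos k
  have hD0 : 0 < D := by rw [hDdef]; positivity
  have hB0 : 0 ≤ B := by rw [hBdef]; positivity
  have hQ0 : 0 ≤ Q := by
    rw [hQdef]
    refine mul_nonneg (mul_nonneg (mul_nonneg (by norm_num) hD0.le) ?_) (Real.exp_pos _).le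
    nlinarith [sq_nonneg k]
  have hr0 : 0 ≤ r := by
    rw [hrdef]; exact mul_nonneg (mul_nonneg (by norm_num) hk0) hE0.le
  -- measurable representative
  have hXae : AEMeasurable X μ := hInt.aemeasurable
  obtain ⟨X', hX'm, hXX'⟩ : ∃ X' : Ω → ℝ, Measurable X' ∧ X =ᵐ[μ] X' :=
    ⟨hXae.mk X, hXae.measurable_mk, hXae.ae_eq_mk⟩
  have hset : ∀ c:ℝ, μ {ω | c ≤ X' ω} = μ {ω | c ≤ X ω} := by
    intro c
    apply measure_congr
    rw [Filter.eventuallyEq_set]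
    filter_upwards [hXX'] with ω h
    simp [h]
  have hX'nn : 0 ≤ᵐ[μ] X' := by
    filter_upwards [hXX'] with ω h
    rw [← h]; exact hXnn ω
  have hInt' : Integrable X' μ := hInt.congr hXX'
  have hmean' : ∫ ω, X' ω ∂μ = μ₀ := by rw [← integral_congr_ae hXX']; exact hmean
  have hμ₀0 : 0 ≤ μ₀ := by rw [← hmean']; exact integral_nonneg_of_ae hX'nn
  have hdom' : ∀ c:ℝ, μ {ω | c ≤ X' ω} ≤ μ' {ω | c ≤ k*(Y ω:ℝ)} :=
    fun c => le_trans (le_of_eq (hset c)) (hdom c)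
  have hμ₀ν : μ₀ ≤ ν * k * E := by
    rw [← hmean', hEdef]
    exact mean_bound μ μ' n p ν k Y X' hk hp0 hp1 hnp hν0 hνk hpmf hX'm hX'nn hInt' hdom'
  have hμ₀B : μ₀ ≤ B₀ := by
    rw [hB₀def]
    have h1 : (k - ν) * (k * E) ≥ 0 := mul_nonneg (by linarith) (mul_nonneg hk0 hE0.le)
    nlinarith
  -- tail bound in the needed form
  have htail : ∀ m:ℕ, μ' {ω | k*((m:ℝ)+1) ≤ k*(Y ω:ℝ)} ≤
      ENNReal.ofReal (ν*k^m/(m+1)!*E) := by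
    intro m
    refine le_trans (measure_mono ?_)
      (by rw [hEdef]; exact tail_bound μ' n p ν k Y hp0 hp1 hnp hν0 hνk hpmf m)
    intro ω hω
    have hω' : k*((m:ℝ)+1) ≤ k*(Y ω:ℝ) := hω
    have h2 : ((m:ℝ)+1) ≤ (Y ω:ℝ) := le_of_mul_le_mul_left hω' hk
    show m + 1 ≤ Y ω
    exact_mod_cast h2
  set a : ℕ → ℝ := fun m => D*((k*((m:ℝ)+2))^2+B)*Real.exp (k*((m:ℝ)+2)) with hadef
  have ha0 : ∀ m:ℕ, 0 ≤ a m := by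
    intro m
    simp only [hadef]
    refine mul_nonneg (mul_nonneg hD0.le ?_) (Real.exp_pos _).le
    nlinarith [sq_nonneg (k*((m:ℝ)+2))]
  have hDkE : (0:ℝ) ≤ D*k*E := mul_nonneg (mul_nonneg hD0.le hk0) hE0.le
  set G : Ω → ENNReal := fun ω => ENNReal.ofReal (D*μ₀^2*E) +
    (ENNReal.ofReal (D*k*E) * ENNReal.ofReal (X' ω) +
     ∑' m:ℕ, Set.indicator {ω' | k*((m:ℝ)+1) ≤ X' ω'}
       (fun _ => ENNReal.ofReal (a m)) ω) with hGdef
  clear_value a G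
  have hpt : ∀ ω, 0 ≤ X' ω →
      ENNReal.ofReal ((X' ω - μ₀)^2 * Real.exp (θ*(X' ω - μ₀))) ≤ G ω := by
    intro ω hx
    set x := X' ω with hxdef
    clear_value x
    have h0 : (x - μ₀)^2 * Real.exp (θ*(x - μ₀)) ≤ D*((x^2+μ₀^2)*Real.exp x) := by
      have habs : θ*(x-μ₀) ≤ B₀ + x := by
        have h1 : θ*(x-μ₀) ≤ |θ*(x-μ₀)| := le_abs_self _
        have h2 : |θ*(x-μ₀)| = |θ| * |x-μ₀| := abs_mul _ _
        have h3 : |θ| ≤ 1 := abs_le.2 ⟨hθ1, hθ2⟩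
        have h4 : |x-μ₀| ≤ x + μ₀ := abs_le.2 ⟨by linarith, by linarith⟩
        have h5 : (0:ℝ) ≤ |x-μ₀| := abs_nonneg _
        have h6 : |θ| * |x-μ₀| ≤ 1 * |x-μ₀| := mul_le_mul_of_nonneg_right h3 h5
        linarith [hμ₀B]
      have hexp : Real.exp (θ*(x-μ₀)) ≤ Real.exp B₀ * Real.exp x := by
        rw [← Real.exp_add]; exact Real.exp_le_exp.2 habs
      have hsq : (x-μ₀)^2 ≤ 2*(x^2+μ₀^2) := by nlinarith [sq_nonneg (x+μ₀)]
      calc (x - μ₀)^2 * Real.exp (θ*(x - μ₀)) ≤ (2*(x^2+μ₀^2)) * (Real.exp B₀ * Real.exp x) :=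
            mul_le_mul hsq hexp (Real.exp_pos _).le (by positivity)
        _ = D*((x^2+μ₀^2)*Real.exp x) := by rw [hDdef]; ring
    rcases lt_or_ge x k with hxk | hxk
    · have e1 : Real.exp x ≤ E := by rw [hEdef]; exact Real.exp_le_exp.2 hxk.le
      have h1 : D*((x^2+μ₀^2)*Real.exp x) ≤ D*μ₀^2*E + D*k*E*x := by
        have hx2 : x^2*Real.exp x ≤ k*E*x := by
          have hxx : x^2 ≤ k*x := by
            rw [pow_two]; exact mul_le_mul_of_nonneg_right hxk.le hx
          calc x^2*Real.exp x ≤ (k*x)*E :=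
                mul_le_mul hxx e1 (Real.exp_pos _).le (mul_nonneg hk0 hx)
            _ = k*E*x := by ring
        have hm2 : μ₀^2*Real.exp x ≤ μ₀^2*E := mul_le_mul_of_nonneg_left e1 (sq_nonneg _)
        calc D*((x^2+μ₀^2)*Real.exp x) = D*(x^2*Real.exp x) + D*(μ₀^2*Real.exp x) := by ring
          _ ≤ D*(k*E*x) + D*(μ₀^2*E) :=
              add_le_add (mul_le_mul_of_nonneg_left hx2 hD0.le)
                (mul_le_mul_of_nonneg_left hm2 hD0.le)
          _ = D*μ₀^2*E + D*k*E*x := by ring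
      calc ENNReal.ofReal ((x - μ₀)^2 * Real.exp (θ*(x - μ₀)))
          ≤ ENNReal.ofReal (D*μ₀^2*E + D*k*E*x) := ENNReal.ofReal_le_ofReal (h0.trans h1)
        _ ≤ ENNReal.ofReal (D*μ₀^2*E) + ENNReal.ofReal (D*k*E*x) := ENNReal.ofReal_add_le
        _ = ENNReal.ofReal (D*μ₀^2*E) + ENNReal.ofReal (D*k*E) * ENNReal.ofReal x := by
            rw [ENNReal.ofReal_mul hDkE]
        _ ≤ G ω := by
            simp only [hGdef, ← hxdef]
            exact add_le_add le_rfl le_self_add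
    · have hm1 : 1 ≤ ⌊x/k⌋₊ := by
        apply Nat.le_floor
        rw [Nat.cast_one]
        exact (one_le_div hk).2 hxk
      obtain ⟨m, hm⟩ : ∃ m:ℕ, ⌊x/k⌋₊ = m+1 := ⟨⌊x/k⌋₊ - 1, by omega⟩
      have hxk0 : 0 ≤ x/k := by positivity
      have hxlow : k*((m:ℝ)+1) ≤ x := by
        have h1 : ((m:ℝ)+1) ≤ x/k := by
          have h2 := Nat.floor_le hxk0
          rw [hm] at h2; push_cast at h2; linarith
        calc k*((m:ℝ)+1) ≤ k*(x/k) := mul_le_mul_of_nonneg_left h1 hk0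
          _ = x := by field_simp
      have hxhigh : x ≤ k*((m:ℝ)+2) := by
        have h1 : x/k < (m:ℝ)+2 := by
          have h2 := Nat.lt_floor_add_one (x/k)
          rw [hm] at h2; push_cast at h2; linarith
        have h2 : x = k*(x/k) := by field_simp
        calc x = k*(x/k) := h2
          _ ≤ k*((m:ℝ)+2) := mul_le_mul_of_nonneg_left h1.le hk0
      have h2 : D*((x^2+μ₀^2)*Real.exp x) ≤ a m := by
        simp only [hadef]
        have e1 : Real.exp x ≤ Real.exp (k*((m:ℝ)+2)) := Real.exp_le_exp.2 hxhigh
        have e2 : x^2 ≤ (k*((m:ℝ)+2))^2 := pow_le_pow_left₀ hx hxhigh 2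
        have e3 : μ₀^2 ≤ B := by
          rw [hBdef]; exact pow_le_pow_left₀ hμ₀0 hμ₀B 2
        have h4 : (x^2+μ₀^2)*Real.exp x ≤ ((k*((m:ℝ)+2))^2+B)*Real.exp (k*((m:ℝ)+2)) :=
          mul_le_mul (add_le_add e2 e3) e1 (Real.exp_pos _).le
            (add_nonneg (sq_nonneg _) hB0)
        calc D*((x^2+μ₀^2)*Real.exp x)
            ≤ D*(((k*((m:ℝ)+2))^2+B)*Real.exp (k*((m:ℝ)+2))) :=
              mul_le_mul_of_nonneg_left h4 hD0.le
          _ = D*((k*((m:ℝ)+2))^2+B)*Real.exp (k*((m:ℝ)+2)) := by ring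
      calc ENNReal.ofReal ((x - μ₀)^2 * Real.exp (θ*(x - μ₀)))
          ≤ ENNReal.ofReal (a m) := ENNReal.ofReal_le_ofReal (h0.trans h2)
        _ = Set.indicator {ω' | k*((m:ℝ)+1) ≤ X' ω'} (fun _ => ENNReal.ofReal (a m)) ω :=
            (Set.indicator_of_mem (show ω ∈ {ω' | k*((m:ℝ)+1) ≤ X' ω'} from by
              rw [hxdef] at hxlow; exact hxlow) (fun _ => ENNReal.ofReal (a m))).symm
        _ ≤ ∑' m':ℕ, Set.indicator {ω' | k*((m':ℝ)+1) ≤ X' ω'}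
              (fun _ => ENNReal.ofReal (a m')) ω := ENNReal.le_tsum m
        _ ≤ G ω := by simp only [hGdef]; exact le_add_self.trans le_add_self
  have hSm : ∀ m:ℕ, MeasurableSet {ω | k*((m:ℝ)+1) ≤ X' ω} :=
    fun m => measurableSet_le measurable_const hX'm
  have hGsplit : ∫⁻ ω, G ω ∂μ = ENNReal.ofReal (D*μ₀^2*E) +
      (ENNReal.ofReal (D*k*E) * ENNReal.ofReal μ₀ +
       ∑' m:ℕ, ENNReal.ofReal (a m) * μ {ω | k*((m:ℝ)+1) ≤ X' ω}) := by
    simp only [hGdef]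
    rw [lintegral_add_left measurable_const,
      lintegral_add_left ((hX'm.ennreal_ofReal).const_mul _),
      lintegral_const, measure_univ, mul_one,
      lintegral_const_mul _ hX'm.ennreal_ofReal,
      ← ofReal_integral_eq_lintegral_ofReal hInt' hX'nn, hmean',
      lintegral_tsum (fun m => (measurable_const.indicator (hSm m)).aemeasurable)]
    congr 1
    congr 1
    apply tsum_congr
    intro m
    rw [lintegral_indicator (hSm m), setLIntegral_const]
  have ht1 : ENNReal.ofReal (D*μ₀^2*E) ≤ ENNReal.ofReal ((D*E*(k*E)^2*k)*ν) := by
    apply ENNReal.ofReal_le_ofReal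
    have h1 : μ₀^2 ≤ ν^2*(k*E)^2 := by
      calc μ₀^2 ≤ (ν*k*E)^2 := pow_le_pow_left₀ hμ₀0 hμ₀ν 2
        _ = ν^2*(k*E)^2 := by ring
    have h2 : ν^2*(k*E)^2 ≤ (k*ν)*(k*E)^2 :=
      mul_le_mul_of_nonneg_right
        (by rw [pow_two]; exact mul_le_mul_of_nonneg_right hνk hν0) (sq_nonneg _)
    calc D*μ₀^2*E ≤ D*((k*ν)*(k*E)^2)*E := by
          apply mul_le_mul_of_nonneg_right _ hE0.le
          exact mul_le_mul_of_nonneg_left (h1.trans h2) hD0.le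
      _ = (D*E*(k*E)^2*k)*ν := by ring
  have ht2 : ENNReal.ofReal (D*k*E) * ENNReal.ofReal μ₀ ≤
      ENNReal.ofReal ((D*(k*E)^2)*ν) := by
    rw [← ENNReal.ofReal_mul hDkE]
    apply ENNReal.ofReal_le_ofReal
    calc D*k*E*μ₀ ≤ D*k*E*(ν*k*E) := mul_le_mul_of_nonneg_left hμ₀ν hDkE
      _ = (D*(k*E)^2)*ν := by ring
  have ht3 : (∑' m:ℕ, ENNReal.ofReal (a m) * μ {ω | k*((m:ℝ)+1) ≤ X' ω})
      ≤ ENNReal.ofReal ((Q*Real.exp r)*ν) := by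
    have hterm : ∀ m:ℕ, ENNReal.ofReal (a m) * μ {ω | k*((m:ℝ)+1) ≤ X' ω}
        ≤ ENNReal.ofReal ((ν*Q)*(r^m/(m)!)) := by
      intro m
      calc ENNReal.ofReal (a m) * μ {ω | k*((m:ℝ)+1) ≤ X' ω}
          ≤ ENNReal.ofReal (a m) * ENNReal.ofReal (ν*k^m/(m+1)!*E) :=
            mul_le_mul_right ((hdom' _).trans (htail m)) _
        _ = ENNReal.ofReal (a m * (ν*k^m/(m+1)!*E)) := (ENNReal.ofReal_mul (ha0 m)).symm
        _ ≤ ENNReal.ofReal ((ν*Q)*(r^m/(m)!)) := by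
            apply ENNReal.ofReal_le_ofReal
            simp only [hadef]
            rw [hQdef, hrdef, hEdef]
            exact (term_le k ν D B hk hν0 hD0.le hB0 m).trans (le_of_eq (by ring))
    calc (∑' m:ℕ, ENNReal.ofReal (a m) * μ {ω | k*((m:ℝ)+1) ≤ X' ω})
        ≤ ∑' m:ℕ, ENNReal.ofReal ((ν*Q)*(r^m/(m)!)) := ENNReal.tsum_le_tsum hterm
      _ = ENNReal.ofReal ((ν*Q)*Real.exp r) := aux_tsum (ν*Q) r (mul_nonneg hν0 hQ0) hr0
      _ = ENNReal.ofReal ((Q*Real.exp r)*ν) := by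
          rw [show (ν*Q)*Real.exp r = (Q*Real.exp r)*ν from by ring]
  have hc0 : 0 ≤ (D*E*(k*E)^2*k)*ν :=
    mul_nonneg (mul_nonneg (mul_nonneg (mul_nonneg hD0.le hE0.le) (sq_nonneg _)) hk0) hν0
  have hc1 : 0 ≤ (D*(k*E)^2)*ν := mul_nonneg (mul_nonneg hD0.le (sq_nonneg _)) hν0
  have hc2 : 0 ≤ (Q*Real.exp r)*ν := mul_nonneg (mul_nonneg hQ0 (Real.exp_pos _).le) hν0
  calc ∫⁻ ω, ENNReal.ofReal ((X ω - μ₀)^2 * Real.exp (θ*(X ω - μ₀))) ∂μ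
      = ∫⁻ ω, ENNReal.ofReal ((X' ω - μ₀)^2 * Real.exp (θ*(X' ω - μ₀))) ∂μ := by
        apply lintegral_congr_ae
        filter_upwards [hXX'] with ω h
        rw [h]
    _ ≤ ∫⁻ ω, G ω ∂μ :=
        lintegral_mono_ae (by filter_upwards [hX'nn] with ω h using hpt ω h)
    _ = ENNReal.ofReal (D*μ₀^2*E) +
        (ENNReal.ofReal (D*k*E) * ENNReal.ofReal μ₀ +
         ∑' m:ℕ, ENNReal.ofReal (a m) * μ {ω | k*((m:ℝ)+1) ≤ X' ω}) := hGsplit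
    _ ≤ ENNReal.ofReal ((D*E*(k*E)^2*k)*ν) +
        (ENNReal.ofReal ((D*(k*E)^2)*ν) + ENNReal.ofReal ((Q*Real.exp r)*ν)) :=
        add_le_add ht1 (add_le_add ht2 ht3)
    _ = ENNReal.ofReal ((D*E*(k*E)^2*k)*ν + ((D*(k*E)^2)*ν + (Q*Real.exp r)*ν)) := by
        rw [← ENNReal.ofReal_add hc1 hc2, ← ENNReal.ofReal_add hc0 (add_nonneg hc1 hc2)]
    _ ≤ ENNReal.ofReal ((D*E*(k*E)^2*k + D*(k*E)^2 + Q*Real.exp r + 1)*ν) := by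
        apply ENNReal.ofReal_le_ofReal
        have hexp : (D*E*(k*E)^2*k + D*(k*E)^2 + Q*Real.exp r + 1)*ν =
            (D*E*(k*E)^2*k)*ν + ((D*(k*E)^2)*ν + (Q*Real.exp r)*ν) + ν := by ring
        rw [hexp]
        linarith [hν0]
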